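/- For every k ∈ X with ‖k‖ ≤ 1, it holds that φ⁺(x⁺_α + k − y⁺_α) ≥ (tρ/25)·(1/16 − v*(k)/ρ) − |e*(k − (ρ/4)v)| − |h*(k − (ρ/4)v)|. -/
import Mathlib


open Filter Topology Set

lemma aux_cx (c x : ℝ) (h0 : 0 ≤ c) (h1 : c ≤ 1) : -|x| ≤ c * x := by
  nlinarith [neg_abs_le x, abs_nonneg x]

theorem statement4 {X : Type*} [NormedAddCommGroup X] [NormedSpace ℝ X] [CompleteSpace X]
    (ρ t : ℝ) (hρ0 : 0 < ρ) (hρ1 : ρ < 1 / 4) (ht0 : 0 < t) (ht1 : t < ρ / 16)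
    (v e h : X) (hv : ‖v‖ = 1) (he : ‖e‖ = 1) (hh : ‖h‖ = 1)
    (vs es hs : X →L[ℝ] ℝ) (hvs : ‖vs‖ = 1) (hes : ‖es‖ = 1) (hhs : ‖hs‖ = 1)
    (hvv : vs v = 1) (hee : es e = 1) (hhh : hs h = 1) (heh : |es h| < ρ / 800)
    (xp xm yp ym : X)
    (hxp : xp = (1 - ρ / 2) • e + t • h) (hxm : xm = (1 - ρ / 2) • e - t • h)
    (hyp : yp = xp + (ρ / 4) • v) (hym : ym = xm - (ρ / 4) • v)
    (lam : ℝ) (hlam : lam = 1 - ρ / 100)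
    (phip phim : X →L[ℝ] ℝ)
    (hphip : phip = lam • es + (1 - lam) • (hs - (4 * t / ρ) • vs))
    (hphim : phim = lam • es + (1 - lam) • (-hs + (4 * t / ρ) • vs))
    (k : X) (hk : ‖k‖ ≤ 1) :
    phip (xp + k - yp) ≥
      t * ρ / 25 * (1 / 16 - vs k / ρ) - |es (k - (ρ / 4) • v)| - |hs (k - (ρ / 4) • v)| := by

  have hw : xp + k - yp = k - (ρ / 4) • v := by rw [hyp]; abel
  rw [hw, hphip, hlam]
  simp only [ContinuousLinearMap.add_apply, ContinuousLinearMap.smul_apply,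
    ContinuousLinearMap.coe_sub', Pi.sub_apply, smul_eq_mul]
  have hvw : vs (k - (ρ / 4) • v) = vs k - ρ / 4 := by
    simp [hvv]
  rw [hvw]
  set a := es (k - (ρ / 4) • v) with ha
  set b := hs (k - (ρ / 4) • v) with hb
  set c := vs k with hc
  have h1 : -|a| ≤ a := neg_abs_le a
  have h2 : -|b| ≤ b := neg_abs_le b
  have h3 : (0:ℝ) ≤ |a| := abs_nonneg a
  have h4 : (0:ℝ) ≤ |b| := abs_nonneg b
  have hρne : ρ ≠ 0 := hρ0.ne'
  have h5 : (0:ℝ) ≤ 1 - ρ / 100 := by linarith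
  have h6 : (0:ℝ) ≤ ρ / 100 := by linarith
  have key2 : t * ρ / 25 * (1 / 16 - c / ρ) = t * ρ / 400 - t / 25 * c := by
    field_simp; ring
  have e1 : (1 - (1 - ρ / 100)) = ρ / 100 := by ring
  rw [key2, e1]
  have key : ρ / 100 * (b - 4 * t / ρ * (c - ρ / 4)) = ρ / 100 * b + t * ρ / 100 - t / 25 * c := by
    field_simp; ring
  rw [key]
  have hA : -|a| ≤ (1 - ρ / 100) * a := aux_cx _ _ h5 (by linarith)
  have hB : -|b| ≤ ρ / 100 * b := aux_cx _ _ h6 (by linarith)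
  have hC : (0:ℝ) < t * ρ := mul_pos ht0 hρ0
  linarith
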